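/- arXiv:1402.4070 — 8 statements merged into one kernel-verified Lean document; each statement's English description precedes it below -/
import Mathlib

section
/- Let K be the 6×6 block matrix K = [[F₂, Z₁, Z₂], [Z₃, a, b], [Z₄, c, d]], where z₁, z₂, z₃, z₄ ∈ ℂ have modulus 1, F₂, Z₁, Z₂, Z₃, Z₄ are as defined, and a, b, c, d are 2×2 complex matrices all of whose entries have modulus 1 and whose two rows are orthogonal (a₁₁·conj(a₂₁) + a₁₂·conj(a₂₂) = 0, and similarly for b, c, d). Then for ρ = (1,−1,1,−1,1,−1) one has g(ρ) = Σ_{k=1}^{6} Π_{i=1}^{6} K_{ik}^{ρ_i} = 0. -/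
private lemma vc2_1 {α : Type*} (x : α) (f : Fin 1 → α) :
    Matrix.vecCons x f 1 = f 0 := rfl
private lemma vc3_1 {α : Type*} (x : α) (f : Fin 2 → α) :
    Matrix.vecCons x f 1 = f 0 := rfl
private lemma vc3_2 {α : Type*} (x : α) (f : Fin 2 → α) :
    Matrix.vecCons x f 2 = f 1 := rfl
private lemma vc4_1 {α : Type*} (x : α) (f : Fin 3 → α) :
    Matrix.vecCons x f 1 = f 0 := rfl
private lemma vc4_2 {α : Type*} (x : α) (f : Fin 3 → α) :
    Matrix.vecCons x f 2 = f 1 := rfl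
private lemma vc4_3 {α : Type*} (x : α) (f : Fin 3 → α) :
    Matrix.vecCons x f 3 = f 2 := rfl
private lemma vc5_1 {α : Type*} (x : α) (f : Fin 4 → α) :
    Matrix.vecCons x f 1 = f 0 := rfl
private lemma vc5_2 {α : Type*} (x : α) (f : Fin 4 → α) :
    Matrix.vecCons x f 2 = f 1 := rfl
private lemma vc5_3 {α : Type*} (x : α) (f : Fin 4 → α) :
    Matrix.vecCons x f 3 = f 2 := rfl
private lemma vc5_4 {α : Type*} (x : α) (f : Fin 4 → α) :
    Matrix.vecCons x f 4 = f 3 := rfl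
private lemma vc6_1 {α : Type*} (x : α) (f : Fin 5 → α) :
    Matrix.vecCons x f 1 = f 0 := rfl
private lemma vc6_2 {α : Type*} (x : α) (f : Fin 5 → α) :
    Matrix.vecCons x f 2 = f 1 := rfl
private lemma vc6_3 {α : Type*} (x : α) (f : Fin 5 → α) :
    Matrix.vecCons x f 3 = f 2 := rfl
private lemma vc6_4 {α : Type*} (x : α) (f : Fin 5 → α) :
    Matrix.vecCons x f 4 = f 3 := rfl
private lemma vc6_5 {α : Type*} (x : α) (f : Fin 5 → α) :
    Matrix.vecCons x f 5 = f 4 := rfl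

/-- Case 1 of Theorem 1: for the 6×6 block matrix K = [[F₂,Z₁,Z₂],[Z₃,a,b],[Z₄,c,d]]
with |zᵢ| = 1 and a, b, c, d having unimodular entries and orthogonal rows,
for ρ = (1,−1,1,−1,1,−1) one has g(ρ) = Σ_{k=1}^{6} Π_{i=1}^{6} K_{ik}^{ρ_i} = 0. -/
theorem karlsson_g_rho_case1_eq_zero (z1 z2 z3 z4 : ℂ)
    (hz1 : ‖z1‖ = 1) (hz2 : ‖z2‖ = 1)
    (hz3 : ‖z3‖ = 1) (hz4 : ‖z4‖ = 1)
    (a b c d : Matrix (Fin 2) (Fin 2) ℂ)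
    (hamod : ∀ i j, ‖a i j‖ = 1)
    (hbmod : ∀ i j, ‖b i j‖ = 1)
    (hcmod : ∀ i j, ‖c i j‖ = 1)
    (hdmod : ∀ i j, ‖d i j‖ = 1)
    (haorth : a 0 0 * (starRingEnd ℂ) (a 1 0) + a 0 1 * (starRingEnd ℂ) (a 1 1) = 0)
    (hborth : b 0 0 * (starRingEnd ℂ) (b 1 0) + b 0 1 * (starRingEnd ℂ) (b 1 1) = 0)
    (hcorth : c 0 0 * (starRingEnd ℂ) (c 1 0) + c 0 1 * (starRingEnd ℂ) (c 1 1) = 0)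
    (hdorth : d 0 0 * (starRingEnd ℂ) (d 1 0) + d 0 1 * (starRingEnd ℂ) (d 1 1) = 0)
    (K : Matrix (Fin 6) (Fin 6) ℂ)
    (hK : K = !![1, 1,   1,     1,     1,     1;
                 1, -1,  z1,    -z1,   z2,    -z2;
                 1, z3,  a 0 0, a 0 1, b 0 0, b 0 1;
                 1, -z3, a 1 0, a 1 1, b 1 0, b 1 1;
                 1, z4,  c 0 0, c 0 1, d 0 0, d 0 1;
                 1, -z4, c 1 0, c 1 1, d 1 0, d 1 1])
    (ρ : Fin 6 → ℤ)
    (hρ : ρ = ![1, -1, 1, -1, 1, -1]) :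
    ∑ k : Fin 6, ∏ i : Fin 6, K i k ^ ρ i = 0 := by
  subst hK hρ
  have hm : ∀ w : ℂ, ‖w‖ = 1 → w * (starRingEnd ℂ) w = 1 := fun w hw => by
    rw [Complex.mul_conj]; norm_cast; rw [Complex.normSq_eq_norm_sq, hw]; norm_num
  simp only [Fin.sum_univ_six, Fin.prod_univ_six, Matrix.cons_val', Matrix.cons_val_zero,
    Matrix.cons_val_one, Matrix.head_cons, Matrix.empty_val', Matrix.cons_val_fin_one,
    Matrix.head_fin_const, Matrix.of_apply, Matrix.cons_val_succ, Matrix.head_fin_const,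
    vc2_1, vc3_1, vc3_2, vc4_1, vc4_2, vc4_3, vc5_1, vc5_2, vc5_3, vc5_4, vc6_1, vc6_2, vc6_3, vc6_4, vc6_5, Matrix.tail_cons,
    zpow_one, zpow_neg, zpow_one]
  rw [Complex.inv_eq_conj hz1, Complex.inv_eq_conj hz2,
    show (-z3)⁻¹ = -(starRingEnd ℂ) z3 by rw [inv_neg, Complex.inv_eq_conj hz3],
    show (-z4)⁻¹ = -(starRingEnd ℂ) z4 by rw [inv_neg, Complex.inv_eq_conj hz4],
    show (-z1)⁻¹ = -(starRingEnd ℂ) z1 by rw [inv_neg, Complex.inv_eq_conj hz1],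
    show (-z2)⁻¹ = -(starRingEnd ℂ) z2 by rw [inv_neg, Complex.inv_eq_conj hz2],
    Complex.inv_eq_conj (hamod 1 0), Complex.inv_eq_conj (hamod 1 1),
    Complex.inv_eq_conj (hbmod 1 0), Complex.inv_eq_conj (hbmod 1 1),
    Complex.inv_eq_conj (hcmod 1 0), Complex.inv_eq_conj (hcmod 1 1),
    Complex.inv_eq_conj (hdmod 1 0), Complex.inv_eq_conj (hdmod 1 1)]
  have h3 := hm z3 hz3
  have h4 := hm z4 hz4
  linear_combination (-(z4 * (starRingEnd ℂ) z4)) * h3 - h4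
    + ((starRingEnd ℂ) z1 * (c 0 0 * (starRingEnd ℂ) (c 1 0))) * haorth
    - ((starRingEnd ℂ) z1 * (a 0 1 * (starRingEnd ℂ) (a 1 1))) * hcorth
    + ((starRingEnd ℂ) z2 * (d 0 0 * (starRingEnd ℂ) (d 1 0))) * hborth
    - ((starRingEnd ℂ) z2 * (b 0 1 * (starRingEnd ℂ) (b 1 1))) * hdorth
end

section
/- For all θ, φ ∈ ℝ, with A₁₁, A₁₂, B₁₁, B₁₂ as defined, one has Re(A₁₁² · conj(B₁₁)²) = Re(A₁₂² · conj(B₁₂)²). (In the proof of Theorem 1 this shows the coefficient t₀ vanishes.) -/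
set_option maxHeartbeats 1600000 in
/-- For all θ, φ ∈ ℝ, with A₁₁, A₁₂, B₁₁, B₁₂ as in Karlsson's parametrisation,
Re(A₁₁² · conj(B₁₁)²) = Re(A₁₂² · conj(B₁₂)²). -/
theorem karlsson_t0_re_eq (θ φ : ℝ) (A11 A12 B11 B12 : ℂ)
    (hA11 : A11 = -(1/2 : ℂ) + Complex.I * ((Real.sqrt 3 : ℂ) / 2) *
      ((Real.cos θ : ℂ) + Complex.exp (-Complex.I * (φ : ℂ)) * (Real.sin θ : ℂ)))
    (hA12 : A12 = -(1/2 : ℂ) + Complex.I * ((Real.sqrt 3 : ℂ) / 2) *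
      (-(Real.cos θ : ℂ) + Complex.exp (Complex.I * (φ : ℂ)) * (Real.sin θ : ℂ)))
    (hB11 : B11 = -1 - A11) (hB12 : B12 = -1 - A12) :
    (A11 ^ 2 * ((starRingEnd ℂ) B11) ^ 2).re = (A12 ^ 2 * ((starRingEnd ℂ) B12) ^ 2).re := by
  have e1 : Complex.exp (-Complex.I * (φ : ℂ)) =
      (Real.cos φ : ℂ) - (Real.sin φ : ℂ) * Complex.I := by
    rw [show -Complex.I * (φ : ℂ) = ((-φ : ℝ) : ℂ) * Complex.I by push_cast; ring,
      Complex.exp_mul_I, Complex.ofReal_cos, Complex.ofReal_sin]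
    simp [Real.cos_neg, Real.sin_neg]
    ring
  have e2 : Complex.exp (Complex.I * (φ : ℂ)) =
      (Real.cos φ : ℂ) + (Real.sin φ : ℂ) * Complex.I := by
    rw [show Complex.I * (φ : ℂ) = ((φ : ℝ) : ℂ) * Complex.I by ring,
      Complex.exp_mul_I, Complex.ofReal_cos, Complex.ofReal_sin]
  subst hB11 hB12 hA11 hA12
  rw [e1, e2]
  have h3 : (Real.sqrt 3 : ℝ) ^ 2 = 3 := Real.sq_sqrt (by norm_num)
  simp only [map_sub, map_add, map_mul, map_neg, Complex.conj_I, Complex.conj_ofReal,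
    map_one, map_ofNat, map_div₀]
  simp only [Complex.ext_iff, Complex.add_re, Complex.add_im, Complex.sub_re, Complex.sub_im,
    Complex.mul_re, Complex.mul_im, Complex.neg_re, Complex.neg_im, Complex.I_re, Complex.I_im,
    Complex.ofReal_re, Complex.ofReal_im, Complex.one_re, Complex.one_im, Complex.div_re,
    Complex.div_im, Complex.normSq_ofNat, Complex.re_ofNat, Complex.im_ofNat, pow_two]
  ring_nf
  linear_combination (Real.sqrt 3 ^ 4 * Real.cos θ * Real.cos φ * Real.sin θ ^ 3 / 2) *
      Real.sin_sq_add_cos_sq φ +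
    (Real.sqrt 3 ^ 4 * Real.cos θ * Real.cos φ * Real.sin θ / 2) * Real.sin_sq_add_cos_sq θ +
    (Real.sqrt 3 ^ 2 * Real.cos θ * Real.cos φ * Real.sin θ / 2) * h3
end

section
/- Fix θ, φ ∈ ℝ and let A = [[A₁₁, A₁₂], [conj(A₁₂), −conj(A₁₁)]] with A₁₁, A₁₂ as defined. Let z₁, z₃ ∈ ℂ with |z₁| = |z₃| = 1, Z₃ = [[1,z₃],[1,−z₃]], Z₁ = [[1,1],[z₁,−z₁]], and a = (1/2)Z₃AZ₁. Then a · a* = 2·I₂ (where a* is the conjugate transpose); in particular the two rows of a are orthogonal: a₁₁·conj(a₂₁) + a₁₂·conj(a₂₂) = 0. -/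
/-- With A₁₁, A₁₂ as in Karlsson's parametrisation, |z₁| = |z₃| = 1 and
a = (1/2)Z₃AZ₁, one has a·a* = 2·I₂; in particular the two rows of a are orthogonal. -/
theorem karlsson_a_unitary (θ φ : ℝ) (A11 A12 z1 z3 : ℂ)
    (hA11 : A11 = -(1/2 : ℂ) + Complex.I * ((Real.sqrt 3 : ℂ) / 2) *
      ((Real.cos θ : ℂ) + Complex.exp (-Complex.I * (φ : ℂ)) * (Real.sin θ : ℂ)))
    (hA12 : A12 = -(1/2 : ℂ) + Complex.I * ((Real.sqrt 3 : ℂ) / 2) *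
      (-(Real.cos θ : ℂ) + Complex.exp (Complex.I * (φ : ℂ)) * (Real.sin θ : ℂ)))
    (hz1 : ‖z1‖ = 1) (hz3 : ‖z3‖ = 1)
    (A Z3 Z1 a : Matrix (Fin 2) (Fin 2) ℂ)
    (hA : A = !![A11, A12; (starRingEnd ℂ) A12, -(starRingEnd ℂ) A11])
    (hZ3 : Z3 = !![1, z3; 1, -z3])
    (hZ1 : Z1 = !![1, 1; z1, -z1])
    (ha : a = (1/2 : ℂ) • (Z3 * A * Z1)) :
    a * a.conjTranspose = (2 : ℂ) • (1 : Matrix (Fin 2) (Fin 2) ℂ) ∧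
    a 0 0 * (starRingEnd ℂ) (a 1 0) + a 0 1 * (starRingEnd ℂ) (a 1 1) = 0 := by
  have hnz1 : z1 * (starRingEnd ℂ) z1 = 1 := by
    rw [Complex.mul_conj]
    norm_cast
    simp [Complex.normSq_eq_norm_sq, hz1]
  have hnz3 : z3 * (starRingEnd ℂ) z3 = 1 := by
    rw [Complex.mul_conj]
    norm_cast
    simp [Complex.normSq_eq_norm_sq, hz3]
  have hkey : A11 * (starRingEnd ℂ) A11 + A12 * (starRingEnd ℂ) A12 = 2 := by
    rw [hA11, hA12]
    have e1 : Complex.exp (Complex.I * (φ : ℂ)) =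
        (Real.cos φ : ℂ) + (Real.sin φ : ℂ) * Complex.I := by
      rw [mul_comm, Complex.exp_mul_I]
      simp [← Complex.ofReal_cos, ← Complex.ofReal_sin]
    have e2 : Complex.exp (-Complex.I * (φ : ℂ)) =
        (Real.cos φ : ℂ) - (Real.sin φ : ℂ) * Complex.I := by
      have h : -Complex.I * (φ:ℂ) = ((-φ : ℝ):ℂ) * Complex.I := by push_cast; ring
      rw [h, Complex.exp_mul_I]
      simp [← Complex.ofReal_cos, ← Complex.ofReal_sin, Real.cos_neg, Real.sin_neg]
      push_cast; ring
    rw [e1, e2]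
    simp only [map_add, map_mul, map_sub, map_neg, map_div₀, Complex.conj_ofReal,
      Complex.conj_I, map_one, map_ofNat]
    rw [Complex.ext_iff]
    refine ⟨?_, by simp [Complex.add_re, Complex.add_im, Complex.mul_re, Complex.mul_im,
      Complex.sub_re, Complex.sub_im, Complex.neg_re, Complex.neg_im, Complex.div_re,
      Complex.div_im, Complex.normSq_apply, Complex.I_re, Complex.I_im, Complex.ofReal_re,
      Complex.ofReal_im]; ring⟩
    simp [Complex.add_re, Complex.add_im, Complex.mul_re, Complex.mul_im, Complex.sub_re,
      Complex.sub_im, Complex.neg_re, Complex.neg_im, Complex.div_re, Complex.div_im,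
      Complex.normSq_apply, Complex.I_re, Complex.I_im, Complex.ofReal_re, Complex.ofReal_im]
    ring_nf
    simp only [Complex.sin_ofReal_re, Complex.cos_ofReal_re]
    have h3r : Real.sqrt 3 ^ 2 = 3 := Real.sq_sqrt (by norm_num)
    have hθr := Real.sin_sq_add_cos_sq θ
    have hφr := Real.sin_sq_add_cos_sq φ
    linear_combination ((Real.sin φ ^ 2 * Real.sin θ ^ 2 + Real.sin θ ^ 2 * Real.cos φ ^ 2 +
      Real.cos θ ^ 2) / 2) * h3r + (3/2) * hθr + (3/2) * Real.sin θ ^ 2 * hφr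
  have hZ1u : Z1 * Z1.conjTranspose = (2 : ℂ) • (1 : Matrix (Fin 2) (Fin 2) ℂ) := by
    subst hZ1
    ext i j
    fin_cases i <;> fin_cases j <;>
      simp [Matrix.mul_apply, Fin.sum_univ_two, Matrix.conjTranspose_apply,
        Matrix.one_apply, Matrix.smul_apply] <;>
      first
      | linear_combination 2 * hnz1
      | norm_num
  have hZ3u : Z3 * Z3.conjTranspose = (2 : ℂ) • (1 : Matrix (Fin 2) (Fin 2) ℂ) := by
    subst hZ3
    ext i j
    fin_cases i <;> fin_cases j <;>
      simp [Matrix.mul_apply, Fin.sum_univ_two, Matrix.conjTranspose_apply,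
        Matrix.one_apply, Matrix.smul_apply] <;>
      first
      | linear_combination hnz3
      | linear_combination -hnz3
      | norm_num
  have hAu : A * A.conjTranspose = (2 : ℂ) • (1 : Matrix (Fin 2) (Fin 2) ℂ) := by
    subst hA
    ext i j
    fin_cases i <;> fin_cases j <;>
      simp [Matrix.mul_apply, Fin.sum_univ_two, Matrix.conjTranspose_apply,
        Matrix.one_apply, Matrix.smul_apply] <;>
      first
      | linear_combination hkey
      | ring
  have hmain : a * a.conjTranspose = (2 : ℂ) • (1 : Matrix (Fin 2) (Fin 2) ℂ) := by
    have hstep : a * a.conjTranspose =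
        ((1:ℂ)/4) • (Z3 * (A * (Z1 * (Z1.conjTranspose * (A.conjTranspose * Z3.conjTranspose))))) := by
      subst ha
      simp only [Matrix.conjTranspose_smul, Matrix.smul_mul, Matrix.mul_smul, smul_smul,
        Matrix.conjTranspose_mul, mul_assoc, map_div₀, map_one, map_ofNat]
      norm_num
    rw [hstep, show Z1 * (Z1.conjTranspose * (A.conjTranspose * Z3.conjTranspose)) =
        (2:ℂ) • (A.conjTranspose * Z3.conjTranspose) from by
      rw [← mul_assoc, hZ1u, Matrix.smul_mul, one_mul]]
    rw [Matrix.mul_smul, show A * (A.conjTranspose * Z3.conjTranspose) =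
        (2:ℂ) • Z3.conjTranspose from by
      rw [← mul_assoc, hAu, Matrix.smul_mul, one_mul]]
    rw [smul_smul, Matrix.mul_smul, smul_smul, hZ3u, smul_smul]
    norm_num
  refine ⟨hmain, ?_⟩
  have h01 := congrFun (congrFun hmain 0) 1
  simpa [Matrix.mul_apply, Fin.sum_univ_two, Matrix.conjTranspose_apply,
    Matrix.one_apply, Matrix.smul_apply] using h01
end

section
/- Let H be a d×d complex Hadamard matrix. Then for every γ ∈ ℤ^d, Σ_{r=1}^{d} G_H(γ + π_r) = d². -/
open Finset

/-- The permutation-symmetrised squared Fourier coefficient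
G_H(γ) = (1/d!) Σ_σ |Σ_k Π_i H_{ik}^{γ_{σ(i)}}|². -/
noncomputable def bigGsingle (d : ℕ) (H : Matrix (Fin d) (Fin d) ℂ) (γ : Fin d → ℤ) : ℝ :=
  (1 / (Nat.factorial d : ℝ)) * ∑ σ : Equiv.Perm (Fin d),
    ‖∑ k : Fin d, ∏ i : Fin d, H i k ^ γ (σ i)‖ ^ 2

/-- For a d×d complex Hadamard matrix H and any γ ∈ ℤ^d,
Σ_{r=1}^{d} G_H(γ + π_r) = d². -/
theorem hadamard_sum_G_shift (d : ℕ) (H : Matrix (Fin d) (Fin d) ℂ)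
    (hmod : ∀ i j, ‖H i j‖ = 1)
    (hH : H * H.conjTranspose = (d : ℂ) • (1 : Matrix (Fin d) (Fin d) ℂ))
    (γ : Fin d → ℤ) :
    ∑ r : Fin d, bigGsingle d H (γ + Pi.single r 1) = (d : ℝ) ^ 2 := by
  classical
  rcases Nat.eq_zero_or_pos d with hd0 | hdpos
  · subst hd0; simp
  have hd : (d : ℂ) ≠ 0 := Nat.cast_ne_zero.mpr hdpos.ne'
  have hne : ∀ i j, H i j ≠ 0 := by
    intro i j h
    have := hmod i j
    rw [h, norm_zero] at this
    exact one_ne_zero this.symm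
  -- column orthogonality
  have hHc : H.conjTranspose * H = (d : ℂ) • (1 : Matrix (Fin d) (Fin d) ℂ) := by
    have h1 : H * ((d : ℂ)⁻¹ • H.conjTranspose) = 1 := by
      rw [Matrix.mul_smul, hH, smul_smul, inv_mul_cancel₀ hd, one_smul]
    have h2 := mul_eq_one_comm.mp h1
    calc H.conjTranspose * H = (d : ℂ) • (((d : ℂ)⁻¹ • H.conjTranspose) * H) := by
          rw [Matrix.smul_mul, smul_smul, mul_inv_cancel₀ hd, one_smul]
      _ = (d : ℂ) • 1 := by rw [h2]
  have horth : ∀ k k' : Fin d, ∑ j : Fin d, H j k * (starRingEnd ℂ) (H j k') =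
      if k = k' then (d : ℂ) else 0 := by
    intro k k'
    have h := congrFun (congrFun hHc k') k
    simp only [Matrix.mul_apply, Matrix.conjTranspose_apply, Matrix.smul_apply,
      Matrix.one_apply, smul_eq_mul] at h
    have hcomm : (∑ j : Fin d, H j k * (starRingEnd ℂ) (H j k'))
        = ∑ j : Fin d, star (H j k') * H j k :=
      Finset.sum_congr rfl fun j _ => by rw [starRingEnd_apply]; ring
    rw [hcomm, h]
    by_cases hkk : k = k' <;> simp [hkk, eq_comm]
  -- key computation
  have key : ∀ a : Fin d → ℂ, (∀ k, ‖a k‖ = 1) →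
      ∑ j : Fin d, ‖∑ k : Fin d, H j k * a k‖ ^ 2 = (d : ℝ) ^ 2 := by
    intro a ha
    have hC : (∑ j : Fin d, ((‖∑ k : Fin d, H j k * a k‖ ^ 2 : ℝ) : ℂ))
        = (d : ℂ) ^ 2 := by
      have e1 : ∀ j : Fin d, ((‖∑ k : Fin d, H j k * a k‖ ^ 2 : ℝ) : ℂ)
          = ∑ k : Fin d, ∑ k' : Fin d,
              (a k * (starRingEnd ℂ) (a k')) * (H j k * (starRingEnd ℂ) (H j k')) := by
        intro j
        rw [Complex.sq_norm, ← Complex.mul_conj, map_sum, Finset.sum_mul_sum]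
        refine Finset.sum_congr rfl fun k _ => Finset.sum_congr rfl fun k' _ => ?_
        rw [map_mul]; ring
      calc (∑ j : Fin d, ((‖∑ k : Fin d, H j k * a k‖ ^ 2 : ℝ) : ℂ))
          = ∑ j : Fin d, ∑ k : Fin d, ∑ k' : Fin d,
              (a k * (starRingEnd ℂ) (a k')) * (H j k * (starRingEnd ℂ) (H j k')) :=
            Finset.sum_congr rfl fun j _ => e1 j
        _ = ∑ k : Fin d, ∑ k' : Fin d,
              (a k * (starRingEnd ℂ) (a k')) * ∑ j : Fin d, H j k * (starRingEnd ℂ) (H j k') := by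
            rw [Finset.sum_comm]
            refine Finset.sum_congr rfl fun k _ => ?_
            rw [Finset.sum_comm]
            exact Finset.sum_congr rfl fun k' _ => (Finset.mul_sum _ _ _).symm
        _ = ∑ k : Fin d, (a k * (starRingEnd ℂ) (a k)) * (d : ℂ) := by
            refine Finset.sum_congr rfl fun k _ => ?_
            have h : ∀ k' : Fin d,
                (a k * (starRingEnd ℂ) (a k')) * (∑ j : Fin d, H j k * (starRingEnd ℂ) (H j k'))
                = if k = k' then (a k * (starRingEnd ℂ) (a k)) * (d : ℂ) else 0 := by
              intro k'
              rw [horth k k']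
              by_cases hkk : k = k'
              · subst hkk; simp
              · simp [hkk]
            rw [Finset.sum_congr rfl fun k' _ => h k']
            simp
        _ = ∑ _k : Fin d, (d : ℂ) := by
            refine Finset.sum_congr rfl fun k _ => ?_
            rw [Complex.mul_conj, Complex.normSq_eq_norm_sq, ha k]
            simp
        _ = (d : ℂ) ^ 2 := by
            rw [Finset.sum_const, Finset.card_univ, Fintype.card_fin, nsmul_eq_mul, sq]
    rw [← Complex.ofReal_sum] at hC
    exact_mod_cast hC
  -- per-permutation identity
  have perσ : ∀ σ : Equiv.Perm (Fin d),
      ∑ r : Fin d, ‖∑ k : Fin d, ∏ i : Fin d,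
        H i k ^ ((γ + Pi.single r 1 : Fin d → ℤ) (σ i))‖ ^ 2 = (d : ℝ) ^ 2 := by
    intro σ
    set a : Fin d → ℂ := fun k => ∏ i : Fin d, H i k ^ γ (σ i) with ha_def
    have ha : ∀ k, ‖a k‖ = 1 := by
      intro k
      rw [ha_def]
      simp only []
      rw [norm_prod]
      exact Finset.prod_eq_one fun i _ => by rw [norm_zpow, hmod, one_zpow]
    have hterm : ∀ (r k : Fin d),
        (∏ i : Fin d, H i k ^ ((γ + Pi.single r 1 : Fin d → ℤ) (σ i))) = H (σ.symm r) k * a k := by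
      intro r k
      have hstep : ∀ i : Fin d, H i k ^ ((γ + Pi.single r 1 : Fin d → ℤ) (σ i))
          = H i k ^ γ (σ i) * H i k ^ ((Pi.single r 1 : Fin d → ℤ) (σ i)) := by
        intro i
        rw [Pi.add_apply, zpow_add₀ (hne i k)]
      rw [Finset.prod_congr rfl fun i _ => hstep i, Finset.prod_mul_distrib, mul_comm]
      congr 1
      rw [Finset.prod_eq_single (σ.symm r)]
      · rw [Equiv.apply_symm_apply, Pi.single_eq_same, zpow_one]
      · intro i _ hi
        rw [Pi.single_eq_of_ne, zpow_zero]
        intro hcon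
        exact hi (by rw [← hcon, Equiv.symm_apply_apply])
      · intro h; exact absurd (Finset.mem_univ _) h
    calc ∑ r : Fin d, ‖∑ k : Fin d, ∏ i : Fin d,
            H i k ^ ((γ + Pi.single r 1 : Fin d → ℤ) (σ i))‖ ^ 2
        = ∑ r : Fin d, ‖∑ k : Fin d, H (σ.symm r) k * a k‖ ^ 2 := by
          refine Finset.sum_congr rfl fun r _ => ?_
          rw [Finset.sum_congr rfl fun k _ => hterm r k]
      _ = ∑ j : Fin d, ‖∑ k : Fin d, H j k * a k‖ ^ 2 :=
          Fintype.sum_equiv σ.symm _ _ (fun r => rfl)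
      _ = (d : ℝ) ^ 2 := key a ha
  -- put everything together
  have hfac : ((Nat.factorial d : ℝ)) ≠ 0 := Nat.cast_ne_zero.mpr (Nat.factorial_ne_zero d)
  calc ∑ r : Fin d, bigGsingle d H (γ + Pi.single r 1)
      = (1 / (Nat.factorial d : ℝ)) * ∑ σ : Equiv.Perm (Fin d), ∑ r : Fin d,
          ‖∑ k : Fin d, ∏ i : Fin d, H i k ^ ((γ + Pi.single r 1 : Fin d → ℤ) (σ i))‖ ^ 2 := by
        unfold bigGsingle
        rw [← Finset.mul_sum, Finset.sum_comm]
    _ = (1 / (Nat.factorial d : ℝ)) * ∑ _σ : Equiv.Perm (Fin d), (d : ℝ) ^ 2 := by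
        rw [Finset.sum_congr rfl fun σ _ => perσ σ]
    _ = (d : ℝ) ^ 2 := by
        rw [Finset.sum_const, Finset.card_univ, Fintype.card_perm, Fintype.card_fin, nsmul_eq_mul, one_div,
          inv_mul_cancel_left₀ hfac]
end

section
/- Let H₁, …, H_d be d×d complex Hadamard matrices that are pairwise unbiased. Then for every γ ∈ ℤ^d, Σ_{r ≠ t} F(γ + π_r − π_t) − Σ_{r ≠ t} G(γ + π_r − π_t) = 0, where the sums range over all ordered pairs (r,t) with 1 ≤ r, t ≤ d and r ≠ t. -/
open Finset

/-- G(γ) = (1/d!) Σ_σ Σ_j |g_j^σ(γ)|², where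
g_j^σ(γ) = Σ_k Π_i (H_j)_{ik}^{γ_{σ(i)}}. -/
noncomputable def bigG (d : ℕ) (Hs : Fin d → Matrix (Fin d) (Fin d) ℂ) (γ : Fin d → ℤ) : ℝ :=
  (1 / (Nat.factorial d : ℝ)) * ∑ σ : Equiv.Perm (Fin d), ∑ j : Fin d,
    ‖∑ k : Fin d, ∏ i : Fin d, (Hs j) i k ^ γ (σ i)‖ ^ 2

/-- F(γ) = (1/d!) Σ_σ |Σ_j g_j^σ(γ)|², where
g_j^σ(γ) = Σ_k Π_i (H_j)_{ik}^{γ_{σ(i)}}. -/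
noncomputable def bigF (d : ℕ) (Hs : Fin d → Matrix (Fin d) (Fin d) ℂ) (γ : Fin d → ℤ) : ℝ :=
  (1 / (Nat.factorial d : ℝ)) * ∑ σ : Equiv.Perm (Fin d),
    ‖∑ j : Fin d, ∑ k : Fin d, ∏ i : Fin d, (Hs j) i k ^ γ (σ i)‖ ^ 2

/-- Σ over off-diagonal pairs equals full double sum minus diagonal. -/
lemma sum_offdiag {d : ℕ} (f : Fin d → Fin d → ℂ) :
    (∑ a : Fin d, ∑ b : Fin d, if a ≠ b then f a b else 0)
      = (∑ a : Fin d, ∑ b : Fin d, f a b) - ∑ a : Fin d, f a a := by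
  rw [← Finset.sum_sub_distrib]
  refine Finset.sum_congr rfl fun a _ => ?_
  have h : ∀ b, (if a ≠ b then f a b else 0) = f a b - (if a = b then f a b else 0) := by
    intro b; by_cases h : a = b <;> simp [h]
  simp_rw [h, Finset.sum_sub_distrib, Finset.sum_ite_eq, if_pos (Finset.mem_univ a)]

lemma ite_sum {P : Prop} [Decidable P] {α : Type*} [Fintype α] {R : Type*} [AddCommMonoid R]
    (f : α → R) : (if P then ∑ x : α, f x else 0) = ∑ x : α, if P then f x else 0 := by
  split <;> simp

lemma swap4 {d : ℕ} (T : Fin d → Fin d → Fin d → Fin d → ℂ) :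
    ∑ a : Fin d, ∑ b : Fin d, ∑ k : Fin d, ∑ l : Fin d, T a b k l
      = ∑ k : Fin d, ∑ l : Fin d, ∑ a : Fin d, ∑ b : Fin d, T a b k l := by
  calc ∑ a : Fin d, ∑ b : Fin d, ∑ k : Fin d, ∑ l : Fin d, T a b k l
      = ∑ a : Fin d, ∑ k : Fin d, ∑ b : Fin d, ∑ l : Fin d, T a b k l :=
        Finset.sum_congr rfl fun a _ => Finset.sum_comm
    _ = ∑ k : Fin d, ∑ a : Fin d, ∑ b : Fin d, ∑ l : Fin d, T a b k l := Finset.sum_comm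
    _ = ∑ k : Fin d, ∑ a : Fin d, ∑ l : Fin d, ∑ b : Fin d, T a b k l :=
        Finset.sum_congr rfl fun k _ => Finset.sum_congr rfl fun a _ => Finset.sum_comm
    _ = ∑ k : Fin d, ∑ l : Fin d, ∑ a : Fin d, ∑ b : Fin d, T a b k l :=
        Finset.sum_congr rfl fun k _ => Finset.sum_comm

/-- The key cancellation: for two unbiased Hadamard-type matrices, the off-diagonal
sum of cross terms vanishes. -/
lemma cross_sum_zero {d : ℕ} (A B : Matrix (Fin d) (Fin d) ℂ)
    (hA : ∀ i k, ‖A i k‖ = 1) (hB : ∀ i k, ‖B i k‖ = 1)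
    (hub : ∀ k l, ‖∑ i : Fin d, (starRingEnd ℂ) (A i k) * B i l‖ ^ 2 = d)
    (p q : Fin d → ℂ) :
    ∑ a : Fin d, ∑ b : Fin d, (if a ≠ b then
      (∑ k : Fin d, p k * (A a k * (starRingEnd ℂ) (A b k))) *
      (starRingEnd ℂ) (∑ l : Fin d, q l * (B a l * (starRingEnd ℂ) (B b l))) else 0) = 0 := by
  rw [sum_offdiag, sub_eq_zero]
  have hnormA : ∀ i k, A i k * (starRingEnd ℂ) (A i k) = 1 := by
    intro i k
    rw [Complex.mul_conj, Complex.normSq_eq_norm_sq, hA]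
    norm_num
  have hnormB : ∀ i k, B i k * (starRingEnd ℂ) (B i k) = 1 := by
    intro i k
    rw [Complex.mul_conj, Complex.normSq_eq_norm_sq, hB]
    norm_num
  have expand : ∀ a b : Fin d,
      (∑ k : Fin d, p k * (A a k * (starRingEnd ℂ) (A b k))) *
      (starRingEnd ℂ) (∑ l : Fin d, q l * (B a l * (starRingEnd ℂ) (B b l)))
        = ∑ k : Fin d, ∑ l : Fin d, (p k * (starRingEnd ℂ) (q l)) *
            ((A a k * (starRingEnd ℂ) (B a l)) * ((starRingEnd ℂ) (A b k) * B b l)) := by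
    intro a b
    rw [map_sum, Finset.sum_mul_sum]
    refine Finset.sum_congr rfl fun k _ => Finset.sum_congr rfl fun l _ => ?_
    simp only [map_mul, Complex.conj_conj]
    ring
  have inner_eq : ∀ k l : Fin d,
      (∑ a : Fin d, ∑ b : Fin d, (p k * (starRingEnd ℂ) (q l)) *
          ((A a k * (starRingEnd ℂ) (B a l)) * ((starRingEnd ℂ) (A b k) * B b l)))
        = (p k * (starRingEnd ℂ) (q l)) * (d : ℂ) := by
    intro k l
    have hfac :
        (∑ a : Fin d, ∑ b : Fin d, (p k * (starRingEnd ℂ) (q l)) *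
            ((A a k * (starRingEnd ℂ) (B a l)) * ((starRingEnd ℂ) (A b k) * B b l)))
          = (p k * (starRingEnd ℂ) (q l)) *
              ((∑ a : Fin d, A a k * (starRingEnd ℂ) (B a l)) *
               (∑ b : Fin d, (starRingEnd ℂ) (A b k) * B b l)) := by
      rw [Finset.sum_mul_sum, Finset.mul_sum]
      simp_rw [Finset.mul_sum]
    have hc : (∑ a : Fin d, A a k * (starRingEnd ℂ) (B a l))
        = (starRingEnd ℂ) (∑ b : Fin d, (starRingEnd ℂ) (A b k) * B b l) := by
      rw [map_sum]
      exact Finset.sum_congr rfl fun b _ => by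
        simp only [map_mul, Complex.conj_conj]
    rw [hfac, hc, mul_comm ((starRingEnd ℂ) _), Complex.mul_conj, Complex.normSq_eq_norm_sq, hub]
    push_cast
    ring
  have full : (∑ a : Fin d, ∑ b : Fin d,
      (∑ k : Fin d, p k * (A a k * (starRingEnd ℂ) (A b k))) *
        (starRingEnd ℂ) (∑ l : Fin d, q l * (B a l * (starRingEnd ℂ) (B b l))))
      = ((∑ k : Fin d, p k) * (starRingEnd ℂ) (∑ l : Fin d, q l)) * (d:ℂ) := by
    simp_rw [expand]
    rw [swap4]
    simp_rw [inner_eq, ← Finset.sum_mul]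
    rw [← Finset.sum_mul_sum, ← map_sum]
  have dia : (∑ a : Fin d,
      (∑ k : Fin d, p k * (A a k * (starRingEnd ℂ) (A a k))) *
        (starRingEnd ℂ) (∑ l : Fin d, q l * (B a l * (starRingEnd ℂ) (B a l))))
      = ((∑ k : Fin d, p k) * (starRingEnd ℂ) (∑ l : Fin d, q l)) * (d:ℂ) := by
    simp_rw [hnormA, hnormB, mul_one]
    rw [Finset.sum_const, Finset.card_univ, Fintype.card_fin, nsmul_eq_mul]
    ring
  rw [full, dia]

/-- Expansion of the shifted product. -/
lemma prod_shift {d : ℕ} (M : Matrix (Fin d) (Fin d) ℂ)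
    (hM : ∀ i k, ‖M i k‖ = 1)
    (σ : Equiv.Perm (Fin d)) (γ : Fin d → ℤ) (r t k : Fin d) :
    ∏ i : Fin d, M i k ^ (((γ + Pi.single r 1 - Pi.single t 1 : Fin d → ℤ) (σ i)))
      = (∏ i : Fin d, M i k ^ γ (σ i)) *
          (M (σ⁻¹ r) k * (starRingEnd ℂ) (M (σ⁻¹ t) k)) := by
  have hne : ∀ i, M i k ≠ 0 := by
    intro i h
    have := hM i k
    rw [h] at this; simp at this
  have h1 : ∀ i : Fin d, M i k ^ ((γ + Pi.single r 1 - Pi.single t 1 : Fin d → ℤ) (σ i))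
      = M i k ^ γ (σ i) *
        ((if i = σ⁻¹ r then M i k else 1) * (if i = σ⁻¹ t then (M i k)⁻¹ else 1)) := by
    intro i
    have hir : ∀ x : Fin d, (σ i = x) ↔ (i = σ⁻¹ x) := fun x => by
      rw [Equiv.Perm.inv_def, Equiv.apply_eq_iff_eq_symm_apply]
    have he : (γ + Pi.single r 1 - Pi.single t 1 : Fin d → ℤ) (σ i)
        = γ (σ i) + (if i = σ⁻¹ r then (1:ℤ) else 0) - (if i = σ⁻¹ t then (1:ℤ) else 0) := by
      simp [Pi.single_apply, hir]
    have e1 : M i k ^ (if i = σ⁻¹ r then (1:ℤ) else 0) = if i = σ⁻¹ r then M i k else 1 := by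
      split <;> simp
    have e2 : (M i k ^ (if i = σ⁻¹ t then (1:ℤ) else 0))⁻¹
        = if i = σ⁻¹ t then (M i k)⁻¹ else 1 := by
      split <;> simp
    rw [he, zpow_sub₀ (hne i), zpow_add₀ (hne i), div_eq_mul_inv, e1, e2, mul_assoc]
  rw [Finset.prod_congr rfl fun i _ => h1 i, Finset.prod_mul_distrib, Finset.prod_mul_distrib,
    Finset.prod_ite_eq' Finset.univ (σ⁻¹ r) (fun i => M i k),
    Finset.prod_ite_eq' Finset.univ (σ⁻¹ t) (fun i => (M i k)⁻¹),
    if_pos (Finset.mem_univ _), if_pos (Finset.mem_univ _), Complex.inv_eq_conj (hM _ _)]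

set_option maxHeartbeats 1000000 in
/-- For pairwise unbiased d×d complex Hadamard matrices H₁,…,H_d and any γ ∈ ℤ^d,
Σ_{r≠t} F(γ + π_r − π_t) − Σ_{r≠t} G(γ + π_r − π_t) = 0. -/
theorem mub_F_sub_G_shift_sum_eq_zero (d : ℕ) (Hs : Fin d → Matrix (Fin d) (Fin d) ℂ)
    (hmod : ∀ j i k, ‖(Hs j) i k‖ = 1)
    (hH : ∀ j, (Hs j) * (Hs j).conjTranspose = (d : ℂ) • (1 : Matrix (Fin d) (Fin d) ℂ))
    (hunb : ∀ j j', j ≠ j' → ∀ k l : Fin d,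
      ‖∑ i : Fin d, (starRingEnd ℂ) ((Hs j) i k) * (Hs j') i l‖ ^ 2 = d)
    (γ : Fin d → ℤ) :
    (∑ r : Fin d, ∑ t : Fin d,
        if r ≠ t then bigF d Hs (γ + Pi.single r 1 - Pi.single t 1) else 0) -
    (∑ r : Fin d, ∑ t : Fin d,
        if r ≠ t then bigG d Hs (γ + Pi.single r 1 - Pi.single t 1) else 0) = 0 := by
  rw [sub_eq_zero]
  simp only [bigF, bigG]
  have hpull : ∀ (X : Equiv.Perm (Fin d) → Fin d → Fin d → ℝ),
      (∑ r : Fin d, ∑ t : Fin d, if r ≠ t then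
          (1 / (Nat.factorial d : ℝ)) * ∑ σ : Equiv.Perm (Fin d), X σ r t else 0)
        = (1 / (Nat.factorial d : ℝ)) * ∑ σ : Equiv.Perm (Fin d),
            ∑ r : Fin d, ∑ t : Fin d, (if r ≠ t then X σ r t else 0) := by
    intro X
    have hA : ∀ r t : Fin d, (if r ≠ t then
        (1 / (Nat.factorial d : ℝ)) * ∑ σ : Equiv.Perm (Fin d), X σ r t else 0)
        = (1 / (Nat.factorial d : ℝ)) * ∑ σ : Equiv.Perm (Fin d),
            (if r ≠ t then X σ r t else 0) := by
      intro r t; split <;> simp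
    simp_rw [hA, ← Finset.mul_sum]
    congr 1
    calc ∑ r : Fin d, ∑ t : Fin d, ∑ σ : Equiv.Perm (Fin d), (if r ≠ t then X σ r t else 0)
        = ∑ r : Fin d, ∑ σ : Equiv.Perm (Fin d), ∑ t : Fin d, (if r ≠ t then X σ r t else 0) :=
          Finset.sum_congr rfl fun r _ => Finset.sum_comm
      _ = ∑ σ : Equiv.Perm (Fin d), ∑ r : Fin d, ∑ t : Fin d, (if r ≠ t then X σ r t else 0) :=
          Finset.sum_comm
  rw [hpull, hpull]
  congr 1
  refine Finset.sum_congr rfl fun σ _ => ?_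
  -- per-σ real equality
  simp_rw [Complex.sq_norm]
  rw [← Complex.ofReal_inj]
  push_cast [apply_ite Complex.ofReal]
  simp_rw [← Complex.mul_conj]
  -- now a complex identity
  rw [← sub_eq_zero, ← Finset.sum_sub_distrib]
  simp_rw [← Finset.sum_sub_distrib]
  have hcomb : ∀ (P : Prop) [Decidable P] (a b : ℂ),
      (if P then a else 0) - (if P then b else 0) = if P then a - b else 0 := by
    intro P _ a b; split <;> simp
  simp_rw [hcomb]
  have hsq : ∀ r t : Fin d,
      (∑ j : Fin d, ∑ k : Fin d, ∏ i : Fin d,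
          Hs j i k ^ (((γ + Pi.single r 1 - Pi.single t 1 : Fin d → ℤ) (σ i)))) *
        (starRingEnd ℂ) (∑ j : Fin d, ∑ k : Fin d, ∏ i : Fin d,
          Hs j i k ^ (((γ + Pi.single r 1 - Pi.single t 1 : Fin d → ℤ) (σ i)))) -
      (∑ j : Fin d, (∑ k : Fin d, ∏ i : Fin d,
          Hs j i k ^ (((γ + Pi.single r 1 - Pi.single t 1 : Fin d → ℤ) (σ i)))) *
        (starRingEnd ℂ) (∑ k : Fin d, ∏ i : Fin d,
          Hs j i k ^ (((γ + Pi.single r 1 - Pi.single t 1 : Fin d → ℤ) (σ i)))))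
      = ∑ j : Fin d, ∑ j' : Fin d, (if j ≠ j' then
          (∑ k : Fin d, ∏ i : Fin d,
            Hs j i k ^ (((γ + Pi.single r 1 - Pi.single t 1 : Fin d → ℤ) (σ i)))) *
          (starRingEnd ℂ) (∑ k : Fin d, ∏ i : Fin d,
            Hs j' i k ^ (((γ + Pi.single r 1 - Pi.single t 1 : Fin d → ℤ) (σ i)))) else 0) := by
    intro r t
    rw [sum_offdiag]
    congr 1
    rw [map_sum, Finset.sum_mul_sum]
  simp_rw [hsq, ite_sum]
  rw [swap4]
  refine Finset.sum_eq_zero fun j _ => Finset.sum_eq_zero fun j' _ => ?_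
  by_cases hjj : j = j'
  · simp [hjj]
  · have hjj' : (j ≠ j') = True := by simp [hjj]
    simp only [hjj', if_true]
    -- rewrite products via prod_shift
    have hg : ∀ (j : Fin d) (r t k : Fin d),
        (∏ i : Fin d, Hs j i k ^ (((γ + Pi.single r 1 - Pi.single t 1 : Fin d → ℤ) (σ i))))
          = (∏ i : Fin d, Hs j i k ^ γ (σ i)) *
              (Hs j (σ⁻¹ r) k * (starRingEnd ℂ) (Hs j (σ⁻¹ t) k)) :=
      fun j r t k => prod_shift (Hs j) (hmod j) σ γ r t k
    simp_rw [hg]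
    -- reindex (r,t) ↦ (σ⁻¹ r, σ⁻¹ t)
    have hiff : ∀ r t : Fin d, (r ≠ t) ↔ (σ⁻¹ r ≠ σ⁻¹ t) :=
      fun r t => (not_congr (EmbeddingLike.apply_eq_iff_eq σ⁻¹)).symm
    set h : Fin d → Fin d → ℂ := fun a b => if a ≠ b then
        (∑ k : Fin d, (∏ i : Fin d, Hs j i k ^ γ (σ i)) *
            (Hs j a k * (starRingEnd ℂ) (Hs j b k))) *
        (starRingEnd ℂ) (∑ l : Fin d, (∏ i : Fin d, Hs j' i l ^ γ (σ i)) *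
            (Hs j' a l * (starRingEnd ℂ) (Hs j' b l))) else 0 with hdef
    have hred : ∀ r t : Fin d, (if r ≠ t then
        (∑ k : Fin d, (∏ i : Fin d, Hs j i k ^ γ (σ i)) *
            (Hs j (σ⁻¹ r) k * (starRingEnd ℂ) (Hs j (σ⁻¹ t) k))) *
        (starRingEnd ℂ) (∑ l : Fin d, (∏ i : Fin d, Hs j' i l ^ γ (σ i)) *
            (Hs j' (σ⁻¹ r) l * (starRingEnd ℂ) (Hs j' (σ⁻¹ t) l))) else 0)
        = h (σ⁻¹ r) (σ⁻¹ t) := by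
      intro r t
      rw [hdef]
      simp only []
      exact if_congr (hiff r t) rfl rfl
    calc ∑ r : Fin d, ∑ t : Fin d, (if r ≠ t then
          (∑ k : Fin d, (∏ i : Fin d, Hs j i k ^ γ (σ i)) *
              (Hs j (σ⁻¹ r) k * (starRingEnd ℂ) (Hs j (σ⁻¹ t) k))) *
          (starRingEnd ℂ) (∑ l : Fin d, (∏ i : Fin d, Hs j' i l ^ γ (σ i)) *
              (Hs j' (σ⁻¹ r) l * (starRingEnd ℂ) (Hs j' (σ⁻¹ t) l))) else 0)
        = ∑ r : Fin d, ∑ t : Fin d, h (σ⁻¹ r) (σ⁻¹ t) := by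
          exact Finset.sum_congr rfl fun r _ => Finset.sum_congr rfl fun t _ => hred r t
      _ = ∑ r : Fin d, ∑ b : Fin d, h (σ⁻¹ r) b :=
          Finset.sum_congr rfl fun r _ => Equiv.sum_comp (σ⁻¹ : Equiv.Perm (Fin d)) (h (σ⁻¹ r))
      _ = ∑ a : Fin d, ∑ b : Fin d, h a b :=
          Equiv.sum_comp (σ⁻¹ : Equiv.Perm (Fin d)) (fun a => ∑ b : Fin d, h a b)
      _ = 0 := cross_sum_zero (Hs j) (Hs j') (hmod j) (hmod j') (hunb j j' hjj)
              (fun k => ∏ i : Fin d, Hs j i k ^ γ (σ i))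
              (fun l => ∏ i : Fin d, Hs j' i l ^ γ (σ i))
end

section
/- Let H₁, …, H_d be d×d complex Hadamard matrices. Then for every γ ∈ ℤ^d, d·G(γ) + Σ_{r ≠ t} G(γ + π_r − π_t) = d⁴, where the sum ranges over all ordered pairs (r,t) with 1 ≤ r, t ≤ d and r ≠ t. -/
open Finset

private lemma inv_eq_conj_aux {z : ℂ} (hz : ‖z‖ = 1) : z⁻¹ = (starRingEnd ℂ) z := by
  have h : z * (starRingEnd ℂ) z = 1 := by
    rw [Complex.mul_conj]
    norm_cast
    rw [Complex.normSq_eq_norm_sq, hz, one_pow]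
  exact inv_eq_of_mul_eq_one_right h

private lemma swap4_aux {M α β γ' δ : Type*} [AddCommMonoid M]
    [Fintype α] [Fintype β] [Fintype γ'] [Fintype δ]
    (f : α → β → γ' → δ → M) :
    (∑ a, ∑ b, ∑ k, ∑ l, f a b k l) = ∑ k, ∑ l, ∑ a, ∑ b, f a b k l :=
  calc (∑ a, ∑ b, ∑ k, ∑ l, f a b k l)
      = ∑ a, ∑ k, ∑ b, ∑ l, f a b k l :=
        Finset.sum_congr rfl fun _ _ => Finset.sum_comm
    _ = ∑ k, ∑ a, ∑ b, ∑ l, f a b k l := Finset.sum_comm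
    _ = ∑ k, ∑ a, ∑ l, ∑ b, f a b k l :=
        Finset.sum_congr rfl fun _ _ => Finset.sum_congr rfl fun _ _ => Finset.sum_comm
    _ = ∑ k, ∑ l, ∑ a, ∑ b, f a b k l :=
        Finset.sum_congr rfl fun _ _ => Finset.sum_comm

private lemma col_orth_aux (d : ℕ) (H : Matrix (Fin d) (Fin d) ℂ)
    (hH : H * H.conjTranspose = (d : ℂ) • (1 : Matrix (Fin d) (Fin d) ℂ)) (k l : Fin d) :
    (∑ a : Fin d, (starRingEnd ℂ) (H a k) * H a l) = if k = l then (d : ℂ) else 0 := by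
  have hd : 0 < d := k.pos
  have hd0 : (d : ℂ) ≠ 0 := Nat.cast_ne_zero.mpr hd.ne'
  have h1 : H * ((d : ℂ)⁻¹ • H.conjTranspose) = 1 := by
    rw [Matrix.mul_smul, hH, smul_smul, inv_mul_cancel₀ hd0, one_smul]
  have h2 : ((d : ℂ)⁻¹ • H.conjTranspose) * H = 1 := mul_eq_one_comm.mp h1
  have h3 : H.conjTranspose * H = (d : ℂ) • (1 : Matrix (Fin d) (Fin d) ℂ) := by
    calc H.conjTranspose * H = (d : ℂ) • (((d : ℂ)⁻¹ • H.conjTranspose) * H) := by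
          rw [Matrix.smul_mul, smul_smul, mul_inv_cancel₀ hd0, one_smul]
      _ = (d : ℂ) • (1 : Matrix (Fin d) (Fin d) ℂ) := by rw [h2]
  have h4 := congrFun (congrFun h3 k) l
  simpa [Matrix.mul_apply, Matrix.conjTranspose_apply, Matrix.one_apply, Matrix.smul_apply,
    smul_eq_mul, mul_ite, mul_one, mul_zero] using h4

private lemma key_sum_aux (d : ℕ) (H : Matrix (Fin d) (Fin d) ℂ)
    (hcol : ∀ k l : Fin d, (∑ a : Fin d, (starRingEnd ℂ) (H a k) * H a l)
      = if k = l then (d : ℂ) else 0)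
    (hm : ∀ i k, ‖H i k‖ = 1)
    (c : Fin d → ℂ) (hc : ∀ k, ‖c k‖ = 1) :
    (∑ a : Fin d, ∑ b : Fin d,
      ‖∑ k : Fin d, c k * H a k * (H b k)⁻¹‖ ^ 2) = (d : ℝ) ^ 3 := by
  have main : (∑ a : Fin d, ∑ b : Fin d,
      ((∑ k : Fin d, c k * H a k * (H b k)⁻¹) *
        (starRingEnd ℂ) (∑ k : Fin d, c k * H a k * (H b k)⁻¹))) = (d : ℂ) ^ 3 := by
    have expand : ∀ a b : Fin d,
        (∑ k : Fin d, c k * H a k * (H b k)⁻¹) *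
          (starRingEnd ℂ) (∑ k : Fin d, c k * H a k * (H b k)⁻¹)
        = ∑ k : Fin d, ∑ l : Fin d,
            (c k * (starRingEnd ℂ) (c l)) *
              ((H a k * (starRingEnd ℂ) (H a l)) * ((starRingEnd ℂ) (H b k) * H b l)) := by
      intro a b
      rw [map_sum, Finset.sum_mul_sum]
      refine Finset.sum_congr rfl fun k _ => Finset.sum_congr rfl fun l _ => ?_
      rw [inv_eq_conj_aux (hm b k), inv_eq_conj_aux (hm b l), map_mul, map_mul,
        Complex.conj_conj]
      ring
    simp_rw [expand]
    rw [swap4_aux]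
    have inner : ∀ k l : Fin d,
        (∑ a : Fin d, ∑ b : Fin d,
          (c k * (starRingEnd ℂ) (c l)) *
            ((H a k * (starRingEnd ℂ) (H a l)) * ((starRingEnd ℂ) (H b k) * H b l)))
        = (c k * (starRingEnd ℂ) (c l)) *
            ((∑ a : Fin d, H a k * (starRingEnd ℂ) (H a l)) *
              (∑ b : Fin d, (starRingEnd ℂ) (H b k) * H b l)) := by
      intro k l
      simp only [Finset.mul_sum, Finset.sum_mul]
      rw [Finset.sum_comm]
    simp_rw [inner]
    have hrow : ∀ k l : Fin d,
        (∑ a : Fin d, H a k * (starRingEnd ℂ) (H a l)) = if k = l then (d : ℂ) else 0 := by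
      intro k l
      calc (∑ a : Fin d, H a k * (starRingEnd ℂ) (H a l))
          = ∑ a : Fin d, (starRingEnd ℂ) (H a l) * H a k :=
            Finset.sum_congr rfl fun a _ => mul_comm _ _
        _ = if l = k then (d : ℂ) else 0 := hcol l k
        _ = if k = l then (d : ℂ) else 0 := by
            rcases eq_or_ne k l with h | h
            · simp [h]
            · rw [if_neg (Ne.symm h), if_neg h]
    simp_rw [hrow, hcol]
    have hite : ∀ k l : Fin d,
        (c k * (starRingEnd ℂ) (c l)) *
          ((if k = l then (d : ℂ) else 0) * (if k = l then (d : ℂ) else 0))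
        = if k = l then (c k * (starRingEnd ℂ) (c l)) * ((d : ℂ) * (d : ℂ)) else 0 := by
      intro k l; split_ifs <;> ring
    simp_rw [hite, Finset.sum_ite_eq, Finset.mem_univ, if_true]
    have hck : ∀ k : Fin d, c k * (starRingEnd ℂ) (c k) = 1 := by
      intro k
      rw [Complex.mul_conj]
      norm_cast
      rw [Complex.normSq_eq_norm_sq, hc, one_pow]
    simp_rw [hck, one_mul]
    rw [Finset.sum_const, Finset.card_univ, Fintype.card_fin, nsmul_eq_mul]
    ring
  have cast : ((∑ a : Fin d, ∑ b : Fin d,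
      ‖∑ k : Fin d, c k * H a k * (H b k)⁻¹‖ ^ 2 : ℝ) : ℂ) = (((d : ℝ) ^ 3 : ℝ) : ℂ) := by
    push_cast
    rw [← main]
    refine Finset.sum_congr rfl fun a _ => Finset.sum_congr rfl fun b _ => ?_
    rw [Complex.mul_conj, ← Complex.sq_norm]
    norm_cast
  exact_mod_cast cast

/-- For d×d complex Hadamard matrices H₁,…,H_d and any γ ∈ ℤ^d,
d·G(γ) + Σ_{r≠t} G(γ + π_r − π_t) = d⁴. -/
theorem hadamard_G_shift_sum (d : ℕ) (Hs : Fin d → Matrix (Fin d) (Fin d) ℂ)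
    (hmod : ∀ j i k, ‖(Hs j) i k‖ = 1)
    (hH : ∀ j, (Hs j) * (Hs j).conjTranspose = (d : ℂ) • (1 : Matrix (Fin d) (Fin d) ℂ))
    (γ : Fin d → ℤ) :
    (d : ℝ) * bigG d Hs γ +
    (∑ r : Fin d, ∑ t : Fin d,
        if r ≠ t then bigG d Hs (γ + Pi.single r 1 - Pi.single t 1) else 0) = (d : ℝ) ^ 4 := by
  classical
  have step1 : (d : ℝ) * bigG d Hs γ +
      (∑ r : Fin d, ∑ t : Fin d,
        if r ≠ t then bigG d Hs (γ + Pi.single r 1 - Pi.single t 1) else 0)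
      = ∑ r : Fin d, ∑ t : Fin d, bigG d Hs (γ + Pi.single r 1 - Pi.single t 1) := by
    have hsplit : ∀ r t : Fin d, bigG d Hs (γ + Pi.single r 1 - Pi.single t 1)
        = (if r = t then bigG d Hs γ else 0) +
          (if r ≠ t then bigG d Hs (γ + Pi.single r 1 - Pi.single t 1) else 0) := by
      intro r t
      by_cases h : r = t
      · subst h
        have : γ + Pi.single r 1 - Pi.single r 1 = γ := add_sub_cancel_right γ _
        simp [this]
      · simp [h]
    have hrw : (∑ r : Fin d, ∑ t : Fin d, bigG d Hs (γ + Pi.single r 1 - Pi.single t 1))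
        = ∑ r : Fin d, ∑ t : Fin d, ((if r = t then bigG d Hs γ else 0) +
          (if r ≠ t then bigG d Hs (γ + Pi.single r 1 - Pi.single t 1) else 0)) :=
      Finset.sum_congr rfl fun r _ => Finset.sum_congr rfl fun t _ => hsplit r t
    rw [hrw]
    simp only [Finset.sum_add_distrib, Finset.sum_ite_eq, Finset.mem_univ, if_true]
    rw [Finset.sum_const, Finset.card_univ, Fintype.card_fin, nsmul_eq_mul]
  rw [step1]
  have expand_g : ∀ (σ : Equiv.Perm (Fin d)) (j r t : Fin d),
      (∑ k : Fin d, ∏ i : Fin d, Hs j i k ^ (((γ + Pi.single r 1 - Pi.single t 1 : Fin d → ℤ) (σ i))))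
      = ∑ k : Fin d, (∏ i : Fin d, Hs j i k ^ γ (σ i)) * Hs j (σ.symm r) k *
          (Hs j (σ.symm t) k)⁻¹ := by
    intro σ j r t
    refine Finset.sum_congr rfl fun k _ => ?_
    have hne : ∀ i, Hs j i k ≠ 0 := by
      intro i h0
      have := hmod j i k
      rw [h0] at this
      simp at this
    have single_prod : ∀ s : Fin d,
        (∏ i : Fin d, Hs j i k ^ ((Pi.single s 1 : Fin d → ℤ) (σ i))) = Hs j (σ.symm s) k := by
      intro s
      rw [Finset.prod_eq_single (σ.symm s)]
      · rw [Equiv.apply_symm_apply, Pi.single_eq_same, zpow_one]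
      · intro i _ hi
        have hσ : σ i ≠ s := fun h => hi (by rw [← h]; simp)
        rw [Pi.single_apply, if_neg hσ, zpow_zero]
      · intro h; exact absurd (Finset.mem_univ _) h
    calc (∏ i : Fin d, Hs j i k ^ (((γ + Pi.single r 1 - Pi.single t 1 : Fin d → ℤ) (σ i))))
        = ∏ i : Fin d, (Hs j i k ^ γ (σ i) *
            Hs j i k ^ ((Pi.single r 1 : Fin d → ℤ) (σ i)) /
            Hs j i k ^ ((Pi.single t 1 : Fin d → ℤ) (σ i))) := by
          refine Finset.prod_congr rfl fun i _ => ?_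
          rw [Pi.sub_apply, Pi.add_apply, zpow_sub₀ (hne i), zpow_add₀ (hne i)]
      _ = (∏ i : Fin d, Hs j i k ^ γ (σ i)) *
            (∏ i : Fin d, Hs j i k ^ ((Pi.single r 1 : Fin d → ℤ) (σ i))) /
            (∏ i : Fin d, Hs j i k ^ ((Pi.single t 1 : Fin d → ℤ) (σ i))) := by
          rw [Finset.prod_div_distrib, Finset.prod_mul_distrib]
      _ = (∏ i : Fin d, Hs j i k ^ γ (σ i)) * Hs j (σ.symm r) k * (Hs j (σ.symm t) k)⁻¹ := by
          rw [single_prod, single_prod, div_eq_mul_inv]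
  have per : ∀ (σ : Equiv.Perm (Fin d)) (j : Fin d),
      (∑ r : Fin d, ∑ t : Fin d,
        ‖∑ k : Fin d, ∏ i : Fin d,
          Hs j i k ^ (((γ + Pi.single r 1 - Pi.single t 1 : Fin d → ℤ) (σ i)))‖ ^ 2) = (d : ℝ) ^ 3 := by
    intro σ j
    simp_rw [expand_g σ j]
    have reindex : (∑ r : Fin d, ∑ t : Fin d,
        ‖∑ k : Fin d, (∏ i : Fin d, Hs j i k ^ γ (σ i)) * Hs j (σ.symm r) k *
          (Hs j (σ.symm t) k)⁻¹‖ ^ 2)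
        = ∑ a : Fin d, ∑ b : Fin d,
        ‖∑ k : Fin d, (∏ i : Fin d, Hs j i k ^ γ (σ i)) * Hs j a k *
          (Hs j b k)⁻¹‖ ^ 2 :=
      calc _ = ∑ a : Fin d, ∑ t : Fin d,
            ‖∑ k : Fin d, (∏ i : Fin d, Hs j i k ^ γ (σ i)) * Hs j a k *
              (Hs j (σ.symm t) k)⁻¹‖ ^ 2 := Equiv.sum_comp σ.symm _
        _ = _ := Finset.sum_congr rfl fun a _ => Equiv.sum_comp σ.symm
              (fun b => ‖∑ k : Fin d, (∏ i : Fin d, Hs j i k ^ γ (σ i)) *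
                Hs j a k * (Hs j b k)⁻¹‖ ^ 2)
    rw [reindex]
    exact key_sum_aux d (Hs j) (col_orth_aux d (Hs j) (hH j)) (hmod j) _
      (fun k => by
        rw [norm_prod]
        refine Finset.prod_eq_one fun i _ => ?_
        rw [norm_zpow, hmod j i k, one_zpow])
  simp only [bigG]
  simp_rw [← Finset.mul_sum]
  rw [swap4_aux]
  simp_rw [per]
  simp only [Finset.sum_const, Finset.card_univ, Fintype.card_fin, Fintype.card_perm,
    nsmul_eq_mul]
  have hfac : (Nat.factorial d : ℝ) ≠ 0 := Nat.cast_ne_zero.mpr (Nat.factorial_ne_zero d)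
  field_simp
end

section
/- Let H₁, …, H_d be d×d complex Hadamard matrices that are pairwise unbiased. Then for every γ ∈ ℤ^d, d·G(γ) + Σ_{r ≠ t} F(γ + π_r − π_t) = d⁴, where the sum ranges over all ordered pairs (r,t) with 1 ≤ r, t ≤ d and r ≠ t. -/
section MubAux
open Finset Complex

lemma sum_ab (d : ℕ) (A B : Matrix (Fin d) (Fin d) ℂ)
    (hA : ∀ b k, (A b k)⁻¹ = (starRingEnd ℂ) (A b k))
    (hB : ∀ b k, (B b k)⁻¹ = (starRingEnd ℂ) (B b k))
    (k k' : Fin d) (x y : ℂ) :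
    ∑ a, ∑ b, (x * A a k * (A b k)⁻¹) * (starRingEnd ℂ) (y * B a k' * (B b k')⁻¹)
      = x * (starRingEnd ℂ) y * ((∑ a, A a k * (starRingEnd ℂ) (B a k'))
          * (starRingEnd ℂ) (∑ a, A a k * (starRingEnd ℂ) (B a k'))) := by
  have hconj : (starRingEnd ℂ) (∑ a, A a k * (starRingEnd ℂ) (B a k'))
      = ∑ b, (starRingEnd ℂ) (A b k) * B b k' := by
    rw [map_sum]; exact Finset.sum_congr rfl fun b _ => by rw [map_mul, Complex.conj_conj]
  calc ∑ a, ∑ b, (x * A a k * (A b k)⁻¹) * (starRingEnd ℂ) (y * B a k' * (B b k')⁻¹)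
      = ∑ a, ∑ b, (x * (starRingEnd ℂ) y)
          * ((A a k * (starRingEnd ℂ) (B a k')) * ((starRingEnd ℂ) (A b k) * B b k')) := by
        refine Finset.sum_congr rfl fun a _ => Finset.sum_congr rfl fun b _ => ?_
        rw [hA b k, map_mul, map_mul, hB b k', Complex.conj_conj]
        ring
    _ = (x * (starRingEnd ℂ) y) * ((∑ a, A a k * (starRingEnd ℂ) (B a k'))
          * (∑ b, (starRingEnd ℂ) (A b k) * B b k')) := by
        rw [Finset.sum_mul_sum, Finset.mul_sum]
        exact Finset.sum_congr rfl fun a _ => by rw [Finset.mul_sum]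
    _ = x * (starRingEnd ℂ) y * ((∑ a, A a k * (starRingEnd ℂ) (B a k'))
          * (starRingEnd ℂ) (∑ a, A a k * (starRingEnd ℂ) (B a k'))) := by rw [hconj]

lemma sum_ite_ne {M : Type*} [AddCommGroup M] {d : ℕ} (f : Fin d → Fin d → M) :
    ∑ a, ∑ b, (if a ≠ b then f a b else 0) = (∑ a, ∑ b, f a b) - ∑ a, f a a := by
  rw [← Finset.sum_sub_distrib]
  refine Finset.sum_congr rfl fun a _ => ?_
  have : ∀ b, (if a ≠ b then f a b else 0) = f a b - (if b = a then f a b else 0) := by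
    intro b
    by_cases h : a = b <;> simp [h, eq_comm]
  rw [Finset.sum_congr rfl fun b _ => this b, Finset.sum_sub_distrib,
    Finset.sum_ite_eq' Finset.univ a (f a)]
  simp

lemma pair_sum {α β M : Type*} [Fintype α] [Fintype β] [AddCommMonoid M] (f : α → β → M) :
    ∑ p : α × β, f p.1 p.2 = ∑ a, ∑ b, f a b :=
  Fintype.sum_prod_type (f := fun p => f p.1 p.2)

lemma keyC (d : ℕ) (Hs : Fin d → Matrix (Fin d) (Fin d) ℂ) (v : Fin d → Fin d → ℂ)
    (hne : ∀ j a k, Hs j a k ≠ 0)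
    (hinv : ∀ j a k, (Hs j a k)⁻¹ = (starRingEnd ℂ) (Hs j a k))
    (hv : ∀ j k, v j k * (starRingEnd ℂ) (v j k) = 1)
    (hcol : ∀ j (k k' : Fin d), (∑ a, Hs j a k * (starRingEnd ℂ) (Hs j a k'))
      = if k = k' then (d : ℂ) else 0)
    (hub : ∀ j j', j ≠ j' → ∀ k k' : Fin d,
      (∑ a, Hs j a k * (starRingEnd ℂ) (Hs j' a k'))
        * (starRingEnd ℂ) (∑ a, Hs j a k * (starRingEnd ℂ) (Hs j' a k')) = (d : ℂ)) :
    (d : ℂ) * (∑ j, (∑ k, v j k) * (starRingEnd ℂ) (∑ k, v j k))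
      + ∑ a, ∑ b, (if a ≠ b then
          (∑ j, ∑ k, v j k * Hs j a k * (Hs j b k)⁻¹)
            * (starRingEnd ℂ) (∑ j, ∑ k, v j k * Hs j a k * (Hs j b k)⁻¹) else 0)
      = (d : ℂ) ^ 4 := by
  set g : Fin d → ℂ := fun j => ∑ k, v j k with hg
  set S : Fin d → Fin d → ℂ := fun a b => ∑ j, ∑ k, v j k * Hs j a k * (Hs j b k)⁻¹ with hS
  set c : Fin d → Fin d → Fin d → Fin d → ℂ :=
    fun j k j' k' => ∑ a, Hs j a k * (starRingEnd ℂ) (Hs j' a k') with hc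
  -- S a a = ∑ j, g j
  have hSaa : ∀ a, S a a = ∑ j, g j := by
    intro a
    refine Finset.sum_congr rfl fun j _ => ?_
    rw [hg]
    refine Finset.sum_congr rfl fun k _ => ?_
    rw [mul_assoc, mul_inv_cancel₀ (hne j a k), mul_one]
  -- expansion of S a b * conj (S a b) over the product type
  have expand : ∀ a b, S a b * (starRingEnd ℂ) (S a b)
      = ∑ p : (Fin d × Fin d) × Fin d × Fin d,
          (v p.1.1 p.1.2 * Hs p.1.1 a p.1.2 * (Hs p.1.1 b p.1.2)⁻¹)
            * (starRingEnd ℂ) (v p.2.1 p.2.2 * Hs p.2.1 a p.2.2 * (Hs p.2.1 b p.2.2)⁻¹) := by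
    intro a b
    have h1 : S a b = ∑ p : Fin d × Fin d, v p.1 p.2 * Hs p.1 a p.2 * (Hs p.1 b p.2)⁻¹ := by
      rw [hS]; exact (pair_sum fun j k => v j k * Hs j a k * (Hs j b k)⁻¹).symm
    rw [h1, map_sum, Finset.sum_mul_sum]
    exact (pair_sum fun p q : Fin d × Fin d =>
      (v p.1 p.2 * Hs p.1 a p.2 * (Hs p.1 b p.2)⁻¹)
        * (starRingEnd ℂ) (v q.1 q.2 * Hs q.1 a q.2 * (Hs q.1 b q.2)⁻¹)).symm
  -- total sum over all a, b
  have hT : ∑ a, ∑ b, S a b * (starRingEnd ℂ) (S a b)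
      = ∑ p : (Fin d × Fin d) × Fin d × Fin d,
          v p.1.1 p.1.2 * (starRingEnd ℂ) (v p.2.1 p.2.2)
            * (c p.1.1 p.1.2 p.2.1 p.2.2 * (starRingEnd ℂ) (c p.1.1 p.1.2 p.2.1 p.2.2)) := by
    rw [Finset.sum_congr rfl fun a _ => Finset.sum_congr rfl fun b _ => expand a b]
    rw [Finset.sum_congr rfl fun a (_ : a ∈ Finset.univ) => Finset.sum_comm, Finset.sum_comm]
    refine Finset.sum_congr rfl fun p _ => ?_
    exact sum_ab d (Hs p.1.1) (Hs p.2.1) (hinv p.1.1) (hinv p.2.1) p.1.2 p.2.2 _ _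
  -- convert T to nested sums
  have hT2 : ∑ a, ∑ b, S a b * (starRingEnd ℂ) (S a b)
      = ∑ j, ∑ j', ∑ k, ∑ k',
          v j k * (starRingEnd ℂ) (v j' k')
            * (c j k j' k' * (starRingEnd ℂ) (c j k j' k')) := by
    rw [hT]
    rw [pair_sum (fun p q : Fin d × Fin d => v p.1 p.2 * (starRingEnd ℂ) (v q.1 q.2)
      * (c p.1 p.2 q.1 q.2 * (starRingEnd ℂ) (c p.1 p.2 q.1 q.2)))]
    rw [Finset.sum_congr rfl fun p (_ : p ∈ Finset.univ) =>
      pair_sum (fun j' k' => v p.1 p.2 * (starRingEnd ℂ) (v j' k')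
        * (c p.1 p.2 j' k' * (starRingEnd ℂ) (c p.1 p.2 j' k')))]
    rw [pair_sum (fun j k => ∑ j', ∑ k', v j k * (starRingEnd ℂ) (v j' k')
      * (c j k j' k' * (starRingEnd ℂ) (c j k j' k')))]
    exact Finset.sum_congr rfl fun j _ => Finset.sum_comm
  -- the (j, j') block sums
  have hdiag : ∀ j, (∑ k, ∑ k', v j k * (starRingEnd ℂ) (v j k')
      * (c j k j k' * (starRingEnd ℂ) (c j k j k'))) = (d : ℂ) ^ 3 := by
    intro j
    have h1 : ∀ k : Fin d, (∑ k', v j k * (starRingEnd ℂ) (v j k')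
        * (c j k j k' * (starRingEnd ℂ) (c j k j k'))) = (d : ℂ) ^ 2 := by
      intro k
      have h2 : ∀ k' : Fin d, v j k * (starRingEnd ℂ) (v j k')
          * (c j k j k' * (starRingEnd ℂ) (c j k j k'))
          = if k' = k then (d : ℂ) ^ 2 * (v j k * (starRingEnd ℂ) (v j k')) else 0 := by
        intro k'
        simp only [hc]
        rw [hcol j k k']
        by_cases h : k = k'
        · subst h
          simp only [eq_self_iff_true, if_true, Complex.conj_natCast]
          ring
        · simp [h, Ne.symm h]
      rw [Finset.sum_congr rfl fun k' _ => h2 k', Finset.sum_ite_eq' Finset.univ k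
        (fun k' => (d : ℂ) ^ 2 * (v j k * (starRingEnd ℂ) (v j k')))]
      simp [hv j k]
    rw [Finset.sum_congr rfl fun k _ => h1 k]
    simp only [Finset.sum_const, Finset.card_univ, Fintype.card_fin, nsmul_eq_mul]
    ring
  have hoff : ∀ j j', j ≠ j' → (∑ k, ∑ k', v j k * (starRingEnd ℂ) (v j' k')
      * (c j k j' k' * (starRingEnd ℂ) (c j k j' k')))
      = (d : ℂ) * (g j * (starRingEnd ℂ) (g j')) := by
    intro j j' h
    have h2 : ∀ k k' : Fin d, v j k * (starRingEnd ℂ) (v j' k')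
        * (c j k j' k' * (starRingEnd ℂ) (c j k j' k'))
        = (d : ℂ) * (v j k * (starRingEnd ℂ) (v j' k')) := by
      intro k k'
      simp only [hc]
      rw [hub j j' h k k']
      ring
    rw [Finset.sum_congr rfl fun k _ => Finset.sum_congr rfl fun k' _ => h2 k k']
    have h3 : g j * (starRingEnd ℂ) (g j') = ∑ k, ∑ k', v j k * (starRingEnd ℂ) (v j' k') := by
      rw [hg]
      simp only
      rw [map_sum, Finset.sum_mul_sum]
    rw [h3, Finset.mul_sum]
    exact Finset.sum_congr rfl fun k _ => by rw [Finset.mul_sum]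
  -- combine
  set A : ℂ := ∑ j, g j * (starRingEnd ℂ) (g j) with hA
  set P : ℂ := (∑ j, g j) * (starRingEnd ℂ) (∑ j, g j) with hP
  have hPsum : P = ∑ j, ∑ j', g j * (starRingEnd ℂ) (g j') := by
    rw [hP, map_sum, Finset.sum_mul_sum]
  have hT3 : ∑ a, ∑ b, S a b * (starRingEnd ℂ) (S a b)
      = (d : ℂ) ^ 4 - (d : ℂ) * A + (d : ℂ) * P := by
    rw [hT2]
    have h4 : ∀ j j', (∑ k, ∑ k', v j k * (starRingEnd ℂ) (v j' k')
        * (c j k j' k' * (starRingEnd ℂ) (c j k j' k')))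
        = (if j' = j then (d : ℂ) ^ 3 - (d : ℂ) * (g j * (starRingEnd ℂ) (g j')) else 0)
          + (d : ℂ) * (g j * (starRingEnd ℂ) (g j')) := by
      intro j j'
      by_cases h : j' = j
      · subst h; rw [hdiag]; simp only [eq_self_iff_true, if_true]; ring
      · rw [hoff j j' (Ne.symm h)]; simp [h]
    rw [Finset.sum_congr rfl fun j _ => Finset.sum_congr rfl fun j' _ => h4 j j']
    rw [Finset.sum_congr rfl fun j (_ : j ∈ Finset.univ) => Finset.sum_add_distrib]
    rw [Finset.sum_add_distrib]
    have e1 : ∀ j : Fin d, (∑ j', if j' = j then (d : ℂ) ^ 3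
        - (d : ℂ) * (g j * (starRingEnd ℂ) (g j')) else 0)
        = (d : ℂ) ^ 3 - (d : ℂ) * (g j * (starRingEnd ℂ) (g j)) := by
      intro j
      rw [Finset.sum_ite_eq' Finset.univ j
        (fun j' => (d : ℂ) ^ 3 - (d : ℂ) * (g j * (starRingEnd ℂ) (g j')))]
      simp
    have e2 : ∑ j, ∑ j', (d : ℂ) * (g j * (starRingEnd ℂ) (g j')) = (d : ℂ) * P := by
      rw [hPsum, Finset.mul_sum]
      exact Finset.sum_congr rfl fun j _ => by rw [Finset.mul_sum]
    rw [Finset.sum_congr rfl fun j (_ : j ∈ Finset.univ) => e1 j, e2,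
      Finset.sum_sub_distrib, ← Finset.mul_sum, ← hA]
    simp only [Finset.sum_const, Finset.card_univ, Fintype.card_fin, nsmul_eq_mul]
    ring
  have hdiagS : ∑ a, S a a * (starRingEnd ℂ) (S a a) = (d : ℂ) * P := by
    rw [Finset.sum_congr rfl fun a _ => by rw [hSaa a]]
    rw [← hP]
    simp only [Finset.sum_const, Finset.card_univ, Fintype.card_fin, nsmul_eq_mul]
  rw [sum_ite_ne (fun a b => S a b * (starRingEnd ℂ) (S a b)), hT3, hdiagS]
  ring

lemma keyR0 (d : ℕ) (Hs : Fin d → Matrix (Fin d) (Fin d) ℂ) (v : Fin d → Fin d → ℂ)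
    (hne : ∀ j a k, Hs j a k ≠ 0)
    (hinv : ∀ j a k, (Hs j a k)⁻¹ = (starRingEnd ℂ) (Hs j a k))
    (hv : ∀ j k, v j k * (starRingEnd ℂ) (v j k) = 1)
    (hcol : ∀ j (k k' : Fin d), (∑ a, Hs j a k * (starRingEnd ℂ) (Hs j a k'))
      = if k = k' then (d : ℂ) else 0)
    (hub : ∀ j j', j ≠ j' → ∀ k k' : Fin d,
      (∑ a, Hs j a k * (starRingEnd ℂ) (Hs j' a k'))
        * (starRingEnd ℂ) (∑ a, Hs j a k * (starRingEnd ℂ) (Hs j' a k')) = (d : ℂ)) :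
    (d : ℝ) * (∑ j, Complex.normSq (∑ k, v j k))
      + ∑ a, ∑ b, (if a ≠ b then
          Complex.normSq (∑ j, ∑ k, v j k * Hs j a k * (Hs j b k)⁻¹) else 0)
      = (d : ℝ) ^ 4 := by
  have H := keyC d Hs v hne hinv hv hcol hub
  simp only [Complex.mul_conj] at H
  apply Complex.ofReal_injective
  push_cast [apply_ite Complex.ofReal]
  exact_mod_cast H

lemma keyR (d : ℕ) (Hs : Fin d → Matrix (Fin d) (Fin d) ℂ)
    (hmod : ∀ j i k, ‖(Hs j) i k‖ = 1)
    (hH : ∀ j, (Hs j) * (Hs j).conjTranspose = (d : ℂ) • (1 : Matrix (Fin d) (Fin d) ℂ))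
    (hunb : ∀ j j', j ≠ j' → ∀ k l : Fin d,
      ‖∑ i : Fin d, (starRingEnd ℂ) ((Hs j) i k) * (Hs j') i l‖ ^ 2 = d)
    (hd : d ≠ 0) (γ : Fin d → ℤ) (σ : Equiv.Perm (Fin d)) :
    (d : ℝ) * (∑ j, ‖∑ k, ∏ i, (Hs j) i k ^ γ (σ i)‖ ^ 2)
      + ∑ r, ∑ t, (if r ≠ t then
          ‖∑ j, ∑ k, ∏ i,
            (Hs j) i k ^ ((γ + Pi.single r 1 - Pi.single t 1 : Fin d → ℤ) (σ i))‖ ^ 2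
        else 0) = (d : ℝ) ^ 4 := by
  have hdC : (d : ℂ) ≠ 0 := Nat.cast_ne_zero.mpr hd
  have hne : ∀ j a k, Hs j a k ≠ 0 := by
    intro j a k h
    have := hmod j a k
    rw [h] at this
    simp at this
  have hinv : ∀ j a k, (Hs j a k)⁻¹ = (starRingEnd ℂ) (Hs j a k) := by
    intro j a k
    have h2 : Complex.normSq (Hs j a k) = 1 := by rw [← Complex.sq_norm, hmod]; norm_num
    rw [Complex.inv_def, h2]; simp
  have hcol : ∀ j (k k' : Fin d), (∑ a, Hs j a k * (starRingEnd ℂ) (Hs j a k'))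
      = if k = k' then (d : ℂ) else 0 := by
    intro j k k'
    have h1 : (Hs j) * ((d : ℂ)⁻¹ • (Hs j).conjTranspose) = 1 := by
      rw [Matrix.mul_smul, hH, smul_smul, inv_mul_cancel₀ hdC, one_smul]
    have h2 : ((d : ℂ)⁻¹ • (Hs j).conjTranspose) * (Hs j) = 1 := mul_eq_one_comm.mp h1
    have h3 : (Hs j).conjTranspose * (Hs j) = (d : ℂ) • 1 := by
      calc (Hs j).conjTranspose * (Hs j)
          = (d : ℂ) • (((d : ℂ)⁻¹ • (Hs j).conjTranspose) * (Hs j)) := by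
            rw [Matrix.smul_mul, smul_smul, mul_inv_cancel₀ hdC, one_smul]
        _ = (d : ℂ) • 1 := by rw [h2]
    have := congrFun (congrFun h3 k') k
    simpa [Matrix.mul_apply, Matrix.conjTranspose_apply, Matrix.one_apply, mul_comm,
      eq_comm] using this
  have hub : ∀ j j', j ≠ j' → ∀ k k' : Fin d,
      (∑ a, Hs j a k * (starRingEnd ℂ) (Hs j' a k'))
        * (starRingEnd ℂ) (∑ a, Hs j a k * (starRingEnd ℂ) (Hs j' a k')) = (d : ℂ) := by
    intro j j' h k k'
    set c : ℂ := ∑ a, Hs j a k * (starRingEnd ℂ) (Hs j' a k') with hcdef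
    have hconj : (starRingEnd ℂ) c = ∑ a, (starRingEnd ℂ) (Hs j a k) * Hs j' a k' := by
      rw [hcdef, map_sum]
      exact Finset.sum_congr rfl fun a _ => by rw [map_mul, Complex.conj_conj]
    have h2 : Complex.normSq c = d := by
      rw [← Complex.normSq_conj, ← Complex.sq_norm, hconj]
      exact hunb j j' h k k'
    rw [Complex.mul_conj, h2]
    norm_cast
  -- the vector v
  set v : Fin d → Fin d → ℂ := fun j k => ∏ i, Hs j i k ^ γ (σ i) with hvdef
  have hvabs : ∀ j k, ‖v j k‖ = 1 := by
    intro j k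
    rw [hvdef]
    simp only
    rw [norm_prod]
    rw [Finset.prod_congr rfl fun i _ => norm_zpow (Hs j i k) (γ (σ i))]
    rw [Finset.prod_congr rfl fun i _ => by rw [hmod j i k, one_zpow]]
    exact Finset.prod_const_one
  have hv : ∀ j k, v j k * (starRingEnd ℂ) (v j k) = 1 := by
    intro j k
    rw [Complex.mul_conj]
    rw [show Complex.normSq (v j k) = 1 by rw [← Complex.sq_norm, hvabs]; norm_num]
    norm_num
  -- single-exponent products
  have hsingle : ∀ j k (r : Fin d), ∏ i, Hs j i k ^ ((Pi.single r 1 : Fin d → ℤ) (σ i))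
      = Hs j (σ.symm r) k := by
    intro j k r
    have h0 : ∀ i ∈ (Finset.univ : Finset (Fin d)), i ≠ σ.symm r →
        Hs j i k ^ ((Pi.single r 1 : Fin d → ℤ) (σ i)) = 1 := by
      intro i _ hi
      have hne2 : σ i ≠ r := by
        intro h
        exact hi (by rw [← h, Equiv.symm_apply_apply])
      rw [Pi.single_apply, if_neg hne2, zpow_zero]
    rw [Finset.prod_eq_single_of_mem (σ.symm r) (Finset.mem_univ _) h0,
      Equiv.apply_symm_apply, Pi.single_apply, if_pos rfl, zpow_one]
  have hprod : ∀ j k (r t : Fin d),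
      ∏ i, Hs j i k ^ ((γ + Pi.single r 1 - Pi.single t 1 : Fin d → ℤ) (σ i))
        = v j k * Hs j (σ.symm r) k * (Hs j (σ.symm t) k)⁻¹ := by
    intro j k r t
    calc ∏ i, Hs j i k ^ ((γ + Pi.single r 1 - Pi.single t 1 : Fin d → ℤ) (σ i))
        = ∏ i, (Hs j i k ^ γ (σ i) * Hs j i k ^ ((Pi.single r 1 : Fin d → ℤ) (σ i))
            / Hs j i k ^ ((Pi.single t 1 : Fin d → ℤ) (σ i))) := by
          refine Finset.prod_congr rfl fun i _ => ?_
          have he : (γ + Pi.single r 1 - Pi.single t 1 : Fin d → ℤ) (σ i)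
              = γ (σ i) + (Pi.single r 1 : Fin d → ℤ) (σ i) - (Pi.single t 1 : Fin d → ℤ) (σ i) := rfl
          rw [he, zpow_sub₀ (hne j i k), zpow_add₀ (hne j i k)]
      _ = (∏ i, Hs j i k ^ γ (σ i)) * (∏ i, Hs j i k ^ ((Pi.single r 1 : Fin d → ℤ) (σ i)))
            / (∏ i, Hs j i k ^ ((Pi.single t 1 : Fin d → ℤ) (σ i))) := by
          rw [Finset.prod_div_distrib, Finset.prod_mul_distrib]
      _ = v j k * Hs j (σ.symm r) k * (Hs j (σ.symm t) k)⁻¹ := by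
          rw [hsingle j k r, hsingle j k t, div_eq_mul_inv, hvdef]
  -- rewrite the goal
  have key := keyR0 d Hs v hne hinv hv hcol hub
  simp only [Complex.sq_norm]
  -- rewrite shifted products
  have e2 : ∀ r t : Fin d, (if r ≠ t then
      Complex.normSq (∑ j, ∑ k, ∏ i,
        (Hs j) i k ^ ((γ + Pi.single r 1 - Pi.single t 1 : Fin d → ℤ) (σ i))) else 0)
      = (fun a b => if a ≠ b then
          Complex.normSq (∑ j, ∑ k, v j k * Hs j a k * (Hs j b k)⁻¹) else 0)
        (σ.symm r) (σ.symm t) := by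
    intro r t
    simp only
    rw [Finset.sum_congr rfl fun j _ => Finset.sum_congr rfl fun k _ => hprod j k r t]
    exact if_congr (σ.symm.injective.ne_iff).symm rfl rfl
  rw [Finset.sum_congr rfl fun r (_ : r ∈ Finset.univ) =>
    Finset.sum_congr rfl fun t (_ : t ∈ Finset.univ) => e2 r t]
  rw [Finset.sum_congr rfl fun r (_ : r ∈ Finset.univ) =>
    Equiv.sum_comp σ.symm ((fun a b => if a ≠ b then
      Complex.normSq (∑ j, ∑ k, v j k * Hs j a k * (Hs j b k)⁻¹) else 0) (σ.symm r))]
  rw [Equiv.sum_comp σ.symm (fun a => ∑ b, (fun a b => if a ≠ b then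
      Complex.normSq (∑ j, ∑ k, v j k * Hs j a k * (Hs j b k)⁻¹) else 0) a b)]
  exact key

end MubAux


open Finset

/-- For pairwise unbiased d×d complex Hadamard matrices H₁,…,H_d and any γ ∈ ℤ^d,
d·G(γ) + Σ_{r≠t} F(γ + π_r − π_t) = d⁴. -/
theorem mub_G_F_shift_sum (d : ℕ) (Hs : Fin d → Matrix (Fin d) (Fin d) ℂ)
    (hmod : ∀ j i k, ‖(Hs j) i k‖ = 1)
    (hH : ∀ j, (Hs j) * (Hs j).conjTranspose = (d : ℂ) • (1 : Matrix (Fin d) (Fin d) ℂ))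
    (hunb : ∀ j j', j ≠ j' → ∀ k l : Fin d,
      ‖∑ i : Fin d, (starRingEnd ℂ) ((Hs j) i k) * (Hs j') i l‖ ^ 2 = d)
    (γ : Fin d → ℤ) :
    (d : ℝ) * bigG d Hs γ +
    (∑ r : Fin d, ∑ t : Fin d,
        if r ≠ t then bigF d Hs (γ + Pi.single r 1 - Pi.single t 1) else 0) = (d : ℝ) ^ 4 := by
  rcases Nat.eq_zero_or_pos d with hd0 | hdpos
  · subst hd0
    simp
  have hd : d ≠ 0 := hdpos.ne'
  have hfac : ((Nat.factorial d : ℝ)) ≠ 0 := Nat.cast_ne_zero.mpr (Nat.factorial_ne_zero d)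
  simp only [bigG, bigF]
  -- abbreviations
  set X : Equiv.Perm (Fin d) → ℝ := fun σ => ∑ j : Fin d,
    ‖∑ k : Fin d, ∏ i : Fin d, (Hs j) i k ^ γ (σ i)‖ ^ 2 with hX
  set Y : Fin d → Fin d → Equiv.Perm (Fin d) → ℝ := fun r t σ =>
    ‖∑ j : Fin d, ∑ k : Fin d, ∏ i : Fin d,
      (Hs j) i k ^ ((γ + Pi.single r 1 - Pi.single t 1 : Fin d → ℤ) (σ i))‖ ^ 2 with hY
  have h1 : ∀ r t : Fin d,
      (if r ≠ t then (1 / (Nat.factorial d : ℝ)) * ∑ σ : Equiv.Perm (Fin d), Y r t σ else 0)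
      = (1 / (Nat.factorial d : ℝ)) * ∑ σ : Equiv.Perm (Fin d), (if r ≠ t then Y r t σ else 0) := by
    intro r t
    split <;> simp
  rw [Finset.sum_congr rfl fun r (_ : r ∈ Finset.univ) =>
    Finset.sum_congr rfl fun t (_ : t ∈ Finset.univ) => h1 r t]
  rw [Finset.sum_congr rfl fun r (_ : r ∈ Finset.univ) => (Finset.mul_sum Finset.univ
    (fun t => ∑ σ : Equiv.Perm (Fin d), (if r ≠ t then Y r t σ else 0))
    (1 / (Nat.factorial d : ℝ))).symm]
  rw [← Finset.mul_sum]
  have h2 : ∑ r : Fin d, ∑ t : Fin d, ∑ σ : Equiv.Perm (Fin d), (if r ≠ t then Y r t σ else 0)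
      = ∑ σ : Equiv.Perm (Fin d), ∑ r : Fin d, ∑ t : Fin d, (if r ≠ t then Y r t σ else 0) := by
    rw [Finset.sum_congr rfl fun r (_ : r ∈ Finset.univ) => Finset.sum_comm]
    exact Finset.sum_comm
  rw [h2]
  have h3 : ∀ σ : Equiv.Perm (Fin d),
      (d : ℝ) * X σ + ∑ r : Fin d, ∑ t : Fin d, (if r ≠ t then Y r t σ else 0) = (d : ℝ) ^ 4 :=
    fun σ => keyR d Hs hmod hH hunb hd γ σ
  calc (d : ℝ) * ((1 / (Nat.factorial d : ℝ)) * ∑ σ : Equiv.Perm (Fin d), X σ)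
        + (1 / (Nat.factorial d : ℝ)) * ∑ σ : Equiv.Perm (Fin d),
            ∑ r : Fin d, ∑ t : Fin d, (if r ≠ t then Y r t σ else 0)
      = (1 / (Nat.factorial d : ℝ)) * ∑ σ : Equiv.Perm (Fin d),
          ((d : ℝ) * X σ + ∑ r : Fin d, ∑ t : Fin d, (if r ≠ t then Y r t σ else 0)) := by
        rw [Finset.sum_add_distrib, ← Finset.mul_sum]
        ring
    _ = (1 / (Nat.factorial d : ℝ)) * ∑ _σ : Equiv.Perm (Fin d), (d : ℝ) ^ 4 := by
        rw [Finset.sum_congr rfl fun σ _ => h3 σ]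
    _ = (d : ℝ) ^ 4 := by
        simp only [Finset.sum_const, Finset.card_univ, Fintype.card_perm, Fintype.card_fin,
          nsmul_eq_mul]
        field_simp
end

section
/- The conclusion of Theorem 1 fails for the isolated spectral Hadamard matrix S₆⁽⁰⁾: for ρ = (1,1,1,−1,−1,−1) one has g(ρ) = Σ_{k=1}^{6} Π_{i=1}^{6} (S₆⁽⁰⁾)_{ik}^{ρ_i} ≠ 0. -/
theorem cons_val_five' {α : Type*} {m : ℕ} (x : α) (u : Fin m.succ.succ.succ.succ.succ → α) :
    Matrix.vecCons x u 5 = u 4 := rfl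

/-- The conclusion of Theorem 1 fails for the isolated spectral Hadamard matrix S₆⁽⁰⁾:
for ρ = (1,1,1,−1,−1,−1) one has g(ρ) = Σ_k Π_i (S₆⁽⁰⁾)_{ik}^{ρ_i} ≠ 0. -/
theorem spectral_matrix_g_ne_zero (ω : ℂ) (hω : ω = Complex.exp (2 * Real.pi * Complex.I / 3))
    (S : Matrix (Fin 6) (Fin 6) ℂ)
    (hS : S = !![1, 1, 1,   1,   1,   1;
                 1, 1, ω,   ω,   ω^2, ω^2;
                 1, ω, 1,   ω^2, ω^2, ω;
                 1, ω, ω^2, 1,   ω,   ω^2;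
                 1, ω^2, ω^2, ω, 1,   ω;
                 1, ω^2, ω,  ω^2, ω,  1])
    (ρ : Fin 6 → ℤ) (hρ : ρ = ![1, 1, 1, -1, -1, -1]) :
    ∑ k : Fin 6, ∏ i : Fin 6, S i k ^ ρ i ≠ 0 := by
  have hprim : IsPrimitiveRoot ω 3 := by
    rw [hω]
    have := Complex.isPrimitiveRoot_exp 3 (by norm_num)
    simpa using this
  have hω3 : ω ^ 3 = 1 := hprim.pow_eq_one
  have hω0 : ω ≠ 0 := hprim.ne_zero (by norm_num)
  have hωne1 : ω ≠ 1 := hprim.ne_one (by norm_num)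
  subst hS hρ
  simp [Fin.sum_univ_six, Fin.prod_univ_six, zpow_neg, cons_val_five']
  have hinv : ω⁻¹ = ω^2 := inv_eq_of_mul_eq_one_left (by linear_combination hω3)
  have hinv2 : (ω^2)⁻¹ = ω := inv_eq_of_mul_eq_one_left (by linear_combination hω3)
  rw [hinv, hinv2]
  intro h
  have h3 : (1:ℂ) + ω^2 = 0 := by
    linear_combination h/3 - ((2*ω^2+2*ω^3+2+ω^5+ω^2)/3) * hω3
  have h4 : (2:ℂ) = 0 := by
    linear_combination (1 - ω^2 + ω) * h3 + (ω - 1) * hω3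
  norm_num at h4
end
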